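/- Given an instance of MPEMC on graph G=(V,E), construct the bipartite instance on A = {a_v : v∈V}, B = {b_v : v∈V} by replacing each edge uv ∈ E with edges a_u b_v and a_v b_u of cost c(uv), setting r(b_v) = r(v) and r(a_v) = 0. Then: (i) for any r-edge cover J of G, the corresponding bipartite edge set has power at most 2·p_J(V); (ii) for any feasible bipartite solution J', the set J = {uv : a_u b_v ∈ J' or a_v b_u ∈ J'} is an r-edge cover of G with p_J(V) ≤ p_{J'}(A∪B). Hence a ρ-approximation for bipartite MPEMC gives a 2ρ-approximation for MPEMC. -/

import Mathlib

open Finset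

variable {V : Type*} [Fintype V] [DecidableEq V]

/-- The set of edges of `J` incident to the node `v`. -/
def inc (J : Finset (Sym2 V)) (v : V) : Finset (Sym2 V) := J.filter (fun e => v ∈ e)

/-- The power of the node `v` w.r.t. the edge set `J`:
the maximum cost of an edge of `J` incident to `v` (`0` if `v` is isolated). -/
def pw (c : Sym2 V → NNReal) (J : Finset (Sym2 V)) (v : V) : NNReal := (inc J v).sup c

/-- The degree of the node `v` in the graph `(V, J)`. -/
def deg (J : Finset (Sym2 V)) (v : V) : ℕ := (inc J v).card
/-- The power of the copy `a_u` of `u` in side `A` w.r.t. a bipartite edge set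
`J' ⊆ V × V` (the pair `(u, v)` represents the bipartite edge `a_u b_v` of cost
`c s(u, v)`). -/
def bpowA (c : Sym2 V → NNReal) (J' : Finset (V × V)) (u : V) : NNReal :=
  (J'.filter (fun p => p.1 = u)).sup (fun p => c s(p.1, p.2))

/-- The power of the copy `b_v` of `v` in side `B` w.r.t. a bipartite edge set. -/
def bpowB (c : Sym2 V → NNReal) (J' : Finset (V × V)) (v : V) : NNReal :=
  (J'.filter (fun p => p.2 = v)).sup (fun p => c s(p.1, p.2))

/-- The degree of the copy `b_v` in a bipartite edge set. -/
def bdegB (J' : Finset (V × V)) (v : V) : ℕ := (J'.filter (fun p => p.2 = v)).card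

/-- The bipartite edge set corresponding to an edge set `J`: each edge `uv` is replaced by
`a_u b_v` and `a_v b_u`. -/
def toBip (J : Finset (Sym2 V)) : Finset (V × V) :=
  (Finset.univ ×ˢ Finset.univ).filter (fun p => s(p.1, p.2) ∈ J)

/-- The edge set of `G` corresponding to a bipartite edge set `J'`. -/
def toSimple (E : Finset (Sym2 V)) (J' : Finset (V × V)) : Finset (Sym2 V) :=
  E.filter (fun e => ∃ p ∈ J', e = s(p.1, p.2))

lemma bpowA_toBip (c : Sym2 V → NNReal) (J : Finset (Sym2 V)) (u : V) :
    bpowA c (toBip J) u = pw c J u := by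
  apply le_antisymm
  · apply Finset.sup_le
    intro p hp
    obtain ⟨a, b⟩ := p
    simp only [toBip, Finset.mem_filter, Finset.mem_product] at hp
    obtain ⟨⟨_, h1⟩, h2⟩ := hp
    exact Finset.le_sup (f := c)
      (Finset.mem_filter.2 ⟨h1, Sym2.mem_iff.2 (Or.inl h2.symm)⟩)
  · apply Finset.sup_le
    intro e he
    simp only [inc, Finset.mem_filter] at he
    obtain ⟨h1, h2⟩ := he
    have hs : s(u, Sym2.Mem.other' h2) = e := Sym2.other_spec' h2
    have hmem : (u, Sym2.Mem.other' h2) ∈ (toBip J).filter (fun p => p.1 = u) :=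
      Finset.mem_filter.2 ⟨Finset.mem_filter.2 ⟨Finset.mem_product.2
        ⟨Finset.mem_univ _, Finset.mem_univ _⟩, hs.symm ▸ h1⟩, rfl⟩
    calc c e = (fun p : V × V => c s(p.1, p.2)) (u, Sym2.Mem.other' h2) := by
          simp only [hs]
      _ ≤ _ := Finset.le_sup (f := fun p : V × V => c s(p.1, p.2)) hmem

lemma bpowB_toBip (c : Sym2 V → NNReal) (J : Finset (Sym2 V)) (u : V) :
    bpowB c (toBip J) u = pw c J u := by
  apply le_antisymm
  · apply Finset.sup_le
    intro p hp
    obtain ⟨a, b⟩ := p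
    simp only [toBip, Finset.mem_filter, Finset.mem_product] at hp
    obtain ⟨⟨_, h1⟩, h2⟩ := hp
    exact Finset.le_sup (f := c)
      (Finset.mem_filter.2 ⟨h1, Sym2.mem_iff.2 (Or.inr h2.symm)⟩)
  · apply Finset.sup_le
    intro e he
    simp only [inc, Finset.mem_filter] at he
    obtain ⟨h1, h2⟩ := he
    have hs : s(u, Sym2.Mem.other' h2) = e := Sym2.other_spec' h2
    have hs' : s(Sym2.Mem.other' h2, u) = e := by rw [Sym2.eq_swap]; exact hs
    have hmem : (Sym2.Mem.other' h2, u) ∈ (toBip J).filter (fun p => p.2 = u) :=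
      Finset.mem_filter.2 ⟨Finset.mem_filter.2 ⟨Finset.mem_product.2
        ⟨Finset.mem_univ _, Finset.mem_univ _⟩, hs'.symm ▸ h1⟩, rfl⟩
    calc c e = (fun p : V × V => c s(p.1, p.2)) (Sym2.Mem.other' h2, u) := by
          simp only [hs']
      _ ≤ _ := Finset.le_sup (f := fun p : V × V => c s(p.1, p.2)) hmem

/-- The bipartite reduction for MPEMC: (i) for any `r`-edge cover `J` of `G`, the
corresponding bipartite edge set is a feasible bipartite solution of power at most
`2·p_J(V)`; (ii) for any feasible bipartite solution `J'`, the corresponding edge set of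
`G` is an `r`-edge cover of power at most the bipartite power of `J'`. Hence a
`ρ`-approximation for bipartite MPEMC gives a `2ρ`-approximation for MPEMC. -/
theorem stmt19 (E : Finset (Sym2 V)) (c : Sym2 V → NNReal) (r : V → ℕ)
    (hsimple : ∀ e ∈ E, ¬ e.IsDiag) :
    (∀ J ⊆ E, (∀ v, r v ≤ deg J v) →
      (∀ v, r v ≤ bdegB (toBip J) v) ∧
        (∑ u, bpowA c (toBip J) u) + ∑ v, bpowB c (toBip J) v ≤ 2 * ∑ v, pw c J v) ∧
      ∀ J' ⊆ toBip E, (∀ v, r v ≤ bdegB J' v) →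
        (∀ v, r v ≤ deg (toSimple E J') v) ∧
          ∑ v, pw c (toSimple E J') v ≤ (∑ u, bpowA c J' u) + ∑ v, bpowB c J' v := by
  constructor
  · intro J hJE hdeg
    constructor
    · intro v
      refine le_trans (hdeg v) ?_
      unfold deg bdegB
      have key : ∀ e ∈ inc J v, ∃ w, s(w, v) = e := by
        intro e he
        simp only [inc, Finset.mem_filter] at he
        exact ⟨Sym2.Mem.other' he.2, by rw [Sym2.eq_swap]; exact Sym2.other_spec' he.2⟩
      choose f hf using key
      apply Finset.card_le_card_of_injOn (fun e : Sym2 V =>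
        if h : e ∈ inc J v then (f e h, v) else (v, v))
      · intro e (he : e ∈ inc J v)
        have heJ : e ∈ J := Finset.mem_of_mem_filter e he
        simp only [he, dif_pos]
        exact Finset.mem_filter.2 ⟨Finset.mem_filter.2 ⟨Finset.mem_product.2
          ⟨Finset.mem_univ _, Finset.mem_univ _⟩, (hf e he).symm ▸ heJ⟩, rfl⟩
      · intro e1 h1 e2 h2 heq
        simp only [Finset.mem_coe] at h1 h2
        simp only [h1, h2, dif_pos] at heq
        have : f e1 h1 = f e2 h2 := (Prod.mk.injEq _ _ _ _ ▸ heq).1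
        rw [← hf e1 h1, ← hf e2 h2, this]
    · have : (∑ u, bpowA c (toBip J) u) + ∑ v, bpowB c (toBip J) v
          = 2 * ∑ v, pw c J v := by
        simp only [bpowA_toBip, bpowB_toBip]; ring
      exact le_of_eq this
  · intro J' hJ' hcov
    constructor
    · intro v
      refine le_trans (hcov v) ?_
      unfold bdegB deg
      apply Finset.card_le_card_of_injOn (fun p => s(p.1, p.2))
      · intro p hp
        obtain ⟨a, b⟩ := p
        simp only [Finset.mem_coe, Finset.mem_filter] at hp
        obtain ⟨hp1, hp2⟩ := hp
        have hE : s(a, b) ∈ E := by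
          have := hJ' hp1
          simpa [toBip] using this
        simp only [Finset.mem_coe, inc, toSimple, Finset.mem_filter]
        exact ⟨⟨hE, ⟨(a, b), hp1, rfl⟩⟩, by rw [← hp2]; simp⟩
      · intro p hp q hq heq
        obtain ⟨a, b⟩ := p
        obtain ⟨a', b'⟩ := q
        simp only [Finset.coe_filter, Set.mem_setOf_eq] at hp hq
        have hE : s(a, b) ∈ E := by simpa [toBip] using hJ' hp.1
        have hnd := hsimple _ hE
        simp only at heq hp hq
        rw [Sym2.eq_iff] at heq
        rcases heq with ⟨h1, h2⟩ | ⟨h1, h2⟩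
        · exact Prod.ext h1 h2
        · exfalso
          apply hnd
          rw [Sym2.isDiag_iff_proj_eq]
          show a = b
          exact h1.trans (hq.2.trans hp.2.symm)
    · calc ∑ v, pw c (toSimple E J') v
          ≤ ∑ v, (bpowA c J' v + bpowB c J' v) := by
            apply Finset.sum_le_sum
            intro v _
            apply Finset.sup_le
            intro e he
            simp only [inc, toSimple, Finset.mem_filter] at he
            obtain ⟨⟨hE, p, hpJ, hpe⟩, hve⟩ := he
            obtain ⟨a, b⟩ := p
            simp only at hpe
            subst hpe
            rw [Sym2.mem_iff] at hve
            rcases hve with h | h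
            · refine le_add_right ?_
              have hle : c s(a, b) ≤ bpowA c J' a := by
                unfold bpowA
                have : (a, b) ∈ J'.filter (fun p => p.1 = a) :=
                  Finset.mem_filter.2 ⟨hpJ, rfl⟩
                exact Finset.le_sup (f := fun p : V × V => c s(p.1, p.2)) this
              rw [h]; exact hle
            · refine le_add_left ?_
              have hle : c s(a, b) ≤ bpowB c J' b := by
                unfold bpowB
                have : (a, b) ∈ J'.filter (fun p => p.2 = b) :=
                  Finset.mem_filter.2 ⟨hpJ, rfl⟩
                exact Finset.le_sup (f := fun p : V × V => c s(p.1, p.2)) this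
              rw [h]; exact hle
      _ = (∑ u, bpowA c J' u) + ∑ v, bpowB c J' v := Finset.sum_add_distrib
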